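/- Let h : ℝ → ℝ be continuously differentiable and let Φ : ℝ → ℝ be twice differentiable and positive on an open interval I with h(x) ≠ Φ(x)² for all x ∈ I. Suppose Φ satisfies on I the equation Φ'' = (3Φ² + h)/(Φ² − h) · (Φ')²/Φ − h'·Φ'/(Φ² − h) + (Φ⁴ − h²)/Φ. Then for fixed x₀ ∈ I the function u_top(x) = exp(∫_{x₀}^x Φ(ξ)·(Φ'(ξ) − √((h(ξ)−Φ(ξ)²)² + Φ'(ξ)²))/(h(ξ)−Φ(ξ)²) dξ) satisfies u_top''(x) + h(x)·u_top(x) = 0 for all x ∈ I. -/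

import Mathlib

open Real Set MeasureTheory intervalIntegral

lemma key_aux (p q r H H' s : ℝ) (hp0 : p ≠ 0) (hD : H - p ^ 2 ≠ 0) (hs0 : s ≠ 0)
    (hs2 : s ^ 2 = (H - p ^ 2) ^ 2 + q ^ 2)
    (hr : r = (3 * p ^ 2 + H) / (p ^ 2 - H) * q ^ 2 / p - H' * q / (p ^ 2 - H)
        + (p ^ 4 - H ^ 2) / p) :
    ((q * (q - s) + p * (r - (2 * (H - p ^ 2) ^ 1 * (H' - 2 * p ^ 1 * q) + 2 * q ^ 1 * r)
        / (2 * s))) * (H - p ^ 2) - p * (q - s) * (H' - 2 * p ^ 1 * q)) / (H - p ^ 2) ^ 2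
      + (p * (q - s) / (H - p ^ 2)) ^ 2 + H = 0 := by
  have hD' : p ^ 2 - H ≠ 0 := fun h0 => hD (by linarith [sub_eq_zero.mp h0])
  have hr' : p * (p ^ 2 - H) * r = (3 * p ^ 2 + H) * q ^ 2 - p * H' * q + (p ^ 2 - H) ^ 2 * (p ^ 2 + H) := by
    rw [hr]; field_simp; ring
  have hN : s * (H - p ^ 2) ^ 2 * (((q * (q - s) + p * (r - (2 * (H - p ^ 2) ^ 1 * (H' - 2 * p ^ 1 * q) + 2 * q ^ 1 * r)
        / (2 * s))) * (H - p ^ 2) - p * (q - s) * (H' - 2 * p ^ 1 * q)) / (H - p ^ 2) ^ 2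
      + (p * (q - s) / (H - p ^ 2)) ^ 2 + H)
      = s * q * (q - s) * (H - p ^ 2) + s * p * r * (H - p ^ 2)
        - p * (H - p ^ 2) * ((H - p ^ 2) * (H' - 2 * p * q) + q * r)
        - s * p * (q - s) * (H' - 2 * p * q) + s * p ^ 2 * (q - s) ^ 2 + s * H * (H - p ^ 2) ^ 2 := by
    field_simp; ring
  have h0 : s * q * (q - s) * (H - p ^ 2) + s * p * r * (H - p ^ 2)
        - p * (H - p ^ 2) * ((H - p ^ 2) * (H' - 2 * p * q) + q * r)
        - s * p * (q - s) * (H' - 2 * p * q) + s * p ^ 2 * (q - s) ^ 2 + s * H * (H - p ^ 2) ^ 2 = 0 := by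
    linear_combination (-q * (H - p ^ 2) + p * H' - 4 * p ^ 2 * q + p ^ 2 * s) * hs2 + (q - s) * hr'
  have hne : s * (H - p ^ 2) ^ 2 ≠ 0 := mul_ne_zero hs0 (pow_ne_zero 2 hD)
  exact (mul_eq_zero.mp (hN.trans h0)).resolve_left hne

theorem stmt_0 (h Φ : ℝ → ℝ) (a b x₀ : ℝ) (hx₀ : x₀ ∈ Set.Ioo a b)
    (hh : ContDiff ℝ 1 h)
    (hΦ1 : ∀ x ∈ Set.Ioo a b, DifferentiableAt ℝ Φ x)
    (hΦ2 : ∀ x ∈ Set.Ioo a b, DifferentiableAt ℝ (deriv Φ) x)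
    (hΦpos : ∀ x ∈ Set.Ioo a b, 0 < Φ x)
    (hne : ∀ x ∈ Set.Ioo a b, h x ≠ (Φ x) ^ 2)
    (hgeo : ∀ x ∈ Set.Ioo a b,
      deriv (deriv Φ) x =
        (3 * (Φ x) ^ 2 + h x) / ((Φ x) ^ 2 - h x) * (deriv Φ x) ^ 2 / Φ x
          - deriv h x * deriv Φ x / ((Φ x) ^ 2 - h x)
          + ((Φ x) ^ 4 - (h x) ^ 2) / Φ x) :
    ∀ x ∈ Set.Ioo a b,
      deriv (deriv (fun y => Real.exp (∫ ξ in x₀..y,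
          Φ ξ * (deriv Φ ξ - Real.sqrt ((h ξ - (Φ ξ) ^ 2) ^ 2 + (deriv Φ ξ) ^ 2))
            / (h ξ - (Φ ξ) ^ 2)))) x
        + h x * Real.exp (∫ ξ in x₀..x,
          Φ ξ * (deriv Φ ξ - Real.sqrt ((h ξ - (Φ ξ) ^ 2) ^ 2 + (deriv Φ ξ) ^ 2))
            / (h ξ - (Φ ξ) ^ 2)) = 0 := by
  intro x hx
  set g : ℝ → ℝ := fun ξ =>
    Φ ξ * (deriv Φ ξ - Real.sqrt ((h ξ - (Φ ξ) ^ 2) ^ 2 + (deriv Φ ξ) ^ 2))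
      / (h ξ - (Φ ξ) ^ 2) with hgdef
  have hIopen : IsOpen (Set.Ioo a b) := isOpen_Ioo
  have hhd : ∀ y, HasDerivAt h (deriv h y) y := fun y =>
    ((hh.differentiable one_ne_zero) y).hasDerivAt
  -- continuity of g on the interval
  have hgc : ∀ y ∈ Set.Ioo a b, ContinuousAt g y := by
    intro y hy
    have h1 : ContinuousAt Φ y := (hΦ1 y hy).continuousAt
    have h2 : ContinuousAt (deriv Φ) y := (hΦ2 y hy).continuousAt
    have h3 : ContinuousAt h y := (hhd y).differentiableAt.continuousAt
    have hDc : ContinuousAt (fun ξ => h ξ - (Φ ξ) ^ 2) y := h3.sub (h1.pow 2)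
    have hDne : h y - (Φ y) ^ 2 ≠ 0 := sub_ne_zero.mpr (hne y hy)
    exact (h1.mul (h2.sub (Real.continuous_sqrt.continuousAt.comp
      ((hDc.pow 2).add (h2.pow 2))))).div hDc hDne
  -- derivative of the primitive
  have hFd : ∀ y ∈ Set.Ioo a b,
      HasDerivAt (fun t => ∫ ξ in x₀..t, g ξ) (g y) y := by
    intro y hy
    have hsub : Set.uIcc x₀ y ⊆ Set.Ioo a b :=
      Set.ordConnected_Ioo.uIcc_subset hx₀ hy
    have hint : IntervalIntegrable g volume x₀ y :=
      ContinuousOn.intervalIntegrable (fun t ht => ((hgc t (hsub ht)).continuousWithinAt))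
    exact intervalIntegral.integral_hasDerivAt_right hint
      (ContinuousAt.stronglyMeasurableAtFilter hIopen hgc y hy) (hgc y hy)
  -- derivative of u
  have hud : ∀ y ∈ Set.Ioo a b,
      HasDerivAt (fun t => Real.exp (∫ ξ in x₀..t, g ξ))
        (Real.exp (∫ ξ in x₀..y, g ξ) * g y) y := fun y hy => (hFd y hy).exp
  -- data at x
  have hp : HasDerivAt Φ (deriv Φ x) x := (hΦ1 x hx).hasDerivAt
  have hq : HasDerivAt (deriv Φ) (deriv (deriv Φ) x) x := (hΦ2 x hx).hasDerivAt
  have hDne : h x - (Φ x) ^ 2 ≠ 0 := sub_ne_zero.mpr (hne x hx)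
  have hDd : HasDerivAt (fun ξ => h ξ - (Φ ξ) ^ 2)
      (deriv h x - 2 * Φ x ^ 1 * deriv Φ x) x := (hhd x).sub (hp.pow 2)
  have hinnerd : HasDerivAt (fun ξ => (h ξ - (Φ ξ) ^ 2) ^ 2 + (deriv Φ ξ) ^ 2)
      (2 * (h x - (Φ x) ^ 2) ^ 1 * (deriv h x - 2 * Φ x ^ 1 * deriv Φ x)
        + 2 * deriv Φ x ^ 1 * deriv (deriv Φ) x) x := (hDd.pow 2).add (hq.pow 2)
  have hinnerpos : 0 < (h x - (Φ x) ^ 2) ^ 2 + (deriv Φ x) ^ 2 := by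
    have : 0 < (h x - (Φ x) ^ 2) ^ 2 := by positivity
    exact add_pos_of_pos_of_nonneg this (sq_nonneg _)
  have hSd : HasDerivAt
      (fun ξ => Real.sqrt ((h ξ - (Φ ξ) ^ 2) ^ 2 + (deriv Φ ξ) ^ 2))
      ((2 * (h x - (Φ x) ^ 2) ^ 1 * (deriv h x - 2 * Φ x ^ 1 * deriv Φ x)
          + 2 * deriv Φ x ^ 1 * deriv (deriv Φ) x)
        / (2 * Real.sqrt ((h x - (Φ x) ^ 2) ^ 2 + (deriv Φ x) ^ 2))) x :=
    hinnerd.sqrt (ne_of_gt hinnerpos)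
  have hgd : HasDerivAt g
      (((deriv Φ x * (deriv Φ x - Real.sqrt ((h x - (Φ x) ^ 2) ^ 2 + (deriv Φ x) ^ 2))
          + Φ x * (deriv (deriv Φ) x -
            (2 * (h x - (Φ x) ^ 2) ^ 1 * (deriv h x - 2 * Φ x ^ 1 * deriv Φ x)
              + 2 * deriv Φ x ^ 1 * deriv (deriv Φ) x)
            / (2 * Real.sqrt ((h x - (Φ x) ^ 2) ^ 2 + (deriv Φ x) ^ 2))))
          * (h x - (Φ x) ^ 2)
        - Φ x * (deriv Φ x - Real.sqrt ((h x - (Φ x) ^ 2) ^ 2 + (deriv Φ x) ^ 2))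
          * (deriv h x - 2 * Φ x ^ 1 * deriv Φ x))
        / (h x - (Φ x) ^ 2) ^ 2) x :=
    (hp.mul (hq.sub hSd)).div hDd hDne
  -- rewrite the second derivative
  have hev : deriv (fun t => Real.exp (∫ ξ in x₀..t, g ξ))
      =ᶠ[nhds x] fun y => Real.exp (∫ ξ in x₀..y, g ξ) * g y := by
    filter_upwards [hIopen.mem_nhds hx] with y hy
    exact (hud y hy).deriv
  have hd2 : HasDerivAt (fun y => Real.exp (∫ ξ in x₀..y, g ξ) * g y)
      ((Real.exp (∫ ξ in x₀..x, g ξ) * g x) * g x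
        + Real.exp (∫ ξ in x₀..x, g ξ) *
          (((deriv Φ x * (deriv Φ x - Real.sqrt ((h x - (Φ x) ^ 2) ^ 2 + (deriv Φ x) ^ 2))
          + Φ x * (deriv (deriv Φ) x -
            (2 * (h x - (Φ x) ^ 2) ^ 1 * (deriv h x - 2 * Φ x ^ 1 * deriv Φ x)
              + 2 * deriv Φ x ^ 1 * deriv (deriv Φ) x)
            / (2 * Real.sqrt ((h x - (Φ x) ^ 2) ^ 2 + (deriv Φ x) ^ 2))))
          * (h x - (Φ x) ^ 2)
        - Φ x * (deriv Φ x - Real.sqrt ((h x - (Φ x) ^ 2) ^ 2 + (deriv Φ x) ^ 2))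
          * (deriv h x - 2 * Φ x ^ 1 * deriv Φ x))
        / (h x - (Φ x) ^ 2) ^ 2)) x := ((hFd x hx).exp).mul hgd
  have hder : deriv (deriv (fun t => Real.exp (∫ ξ in x₀..t, g ξ))) x
      = (Real.exp (∫ ξ in x₀..x, g ξ) * g x) * g x
        + Real.exp (∫ ξ in x₀..x, g ξ) *
          (((deriv Φ x * (deriv Φ x - Real.sqrt ((h x - (Φ x) ^ 2) ^ 2 + (deriv Φ x) ^ 2))
          + Φ x * (deriv (deriv Φ) x -
            (2 * (h x - (Φ x) ^ 2) ^ 1 * (deriv h x - 2 * Φ x ^ 1 * deriv Φ x)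
              + 2 * deriv Φ x ^ 1 * deriv (deriv Φ) x)
            / (2 * Real.sqrt ((h x - (Φ x) ^ 2) ^ 2 + (deriv Φ x) ^ 2))))
          * (h x - (Φ x) ^ 2)
        - Φ x * (deriv Φ x - Real.sqrt ((h x - (Φ x) ^ 2) ^ 2 + (deriv Φ x) ^ 2))
          * (deriv h x - 2 * Φ x ^ 1 * deriv Φ x))
        / (h x - (Φ x) ^ 2) ^ 2) := by
    rw [hev.deriv_eq]; exact hd2.deriv
  -- the key algebraic identity
  have hs2 : Real.sqrt ((h x - (Φ x) ^ 2) ^ 2 + (deriv Φ x) ^ 2) ^ 2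
      = (h x - (Φ x) ^ 2) ^ 2 + (deriv Φ x) ^ 2 := Real.sq_sqrt (le_of_lt hinnerpos)
  have hspos : 0 < Real.sqrt ((h x - (Φ x) ^ 2) ^ 2 + (deriv Φ x) ^ 2) :=
    Real.sqrt_pos.mpr hinnerpos
  have key : (((deriv Φ x * (deriv Φ x - Real.sqrt ((h x - (Φ x) ^ 2) ^ 2 + (deriv Φ x) ^ 2))
          + Φ x * (deriv (deriv Φ) x -
            (2 * (h x - (Φ x) ^ 2) ^ 1 * (deriv h x - 2 * Φ x ^ 1 * deriv Φ x)
              + 2 * deriv Φ x ^ 1 * deriv (deriv Φ) x)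
            / (2 * Real.sqrt ((h x - (Φ x) ^ 2) ^ 2 + (deriv Φ x) ^ 2))))
          * (h x - (Φ x) ^ 2)
        - Φ x * (deriv Φ x - Real.sqrt ((h x - (Φ x) ^ 2) ^ 2 + (deriv Φ x) ^ 2))
          * (deriv h x - 2 * Φ x ^ 1 * deriv Φ x))
        / (h x - (Φ x) ^ 2) ^ 2) + g x ^ 2 + h x = 0 := by
    have hp0 : Φ x ≠ 0 := ne_of_gt (hΦpos x hx)
    have hs0 : Real.sqrt ((h x - (Φ x) ^ 2) ^ 2 + (deriv Φ x) ^ 2) ≠ 0 := ne_of_gt hspos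
    exact key_aux (Φ x) (deriv Φ x) (deriv (deriv Φ) x) (h x) (deriv h x)
      (Real.sqrt ((h x - (Φ x) ^ 2) ^ 2 + (deriv Φ x) ^ 2)) hp0 hDne hs0 hs2 (hgeo x hx)
  calc deriv (deriv (fun y => Real.exp (∫ ξ in x₀..y, g ξ))) x
        + h x * Real.exp (∫ ξ in x₀..x, g ξ)
      = Real.exp (∫ ξ in x₀..x, g ξ) * ((((deriv Φ x * (deriv Φ x - Real.sqrt ((h x - (Φ x) ^ 2) ^ 2 + (deriv Φ x) ^ 2))
          + Φ x * (deriv (deriv Φ) x -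
            (2 * (h x - (Φ x) ^ 2) ^ 1 * (deriv h x - 2 * Φ x ^ 1 * deriv Φ x)
              + 2 * deriv Φ x ^ 1 * deriv (deriv Φ) x)
            / (2 * Real.sqrt ((h x - (Φ x) ^ 2) ^ 2 + (deriv Φ x) ^ 2))))
          * (h x - (Φ x) ^ 2)
        - Φ x * (deriv Φ x - Real.sqrt ((h x - (Φ x) ^ 2) ^ 2 + (deriv Φ x) ^ 2))
          * (deriv h x - 2 * Φ x ^ 1 * deriv Φ x))
        / (h x - (Φ x) ^ 2) ^ 2) + g x ^ 2 + h x) := by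
        rw [hder]; ring
    _ = 0 := by rw [key, mul_zero]
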